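/- Let x_l, x_{l+1}, r_l, r_{l+1} be nonzero vectors in R^n. Suppose cos(x_l, x_{l+1}) ≥ 1 - δ², cos(x_l, r_l) ≥ 1 - ι², and cos(x_{l+1}, r_{l+1}) ≥ 1 - ι², for δ, ι ∈ (0,1). Then the unit normalizations of r_l and r_{l+1} satisfy ‖r_l/‖r_l‖ - r_{l+1}/‖r_{l+1}‖‖ ≤ √2(δ + 2ι), and hence cos(r_l, r_{l+1}) ≥ 1 - (δ + 2ι)². -/
import Mathlib


open scoped RealInnerProductSpace

lemma norm_unit_sub_sq {F : Type*} [NormedAddCommGroup F] [InnerProductSpace ℝ F]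
    (a b : F) (ha : a ≠ 0) (hb : b ≠ 0) :
    ‖(‖a‖)⁻¹ • a - (‖b‖)⁻¹ • b‖ ^ 2 = 2 - 2 * (⟪a, b⟫ / (‖a‖ * ‖b‖)) := by
  have h1 : ‖(‖a‖)⁻¹ • a‖ = 1 := norm_smul_inv_norm ha
  have h2 : ‖(‖b‖)⁻¹ • b‖ = 1 := norm_smul_inv_norm hb
  have hna : ‖a‖ ≠ 0 := norm_ne_zero_iff.mpr ha
  have hnb : ‖b‖ ≠ 0 := norm_ne_zero_iff.mpr hb
  rw [@norm_sub_sq_real, h1, h2, real_inner_smul_left, real_inner_smul_right]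
  field_simp
  ring

lemma norm_unit_sub_le {F : Type*} [NormedAddCommGroup F] [InnerProductSpace ℝ F]
    (a b : F) (ha : a ≠ 0) (hb : b ≠ 0) (s : ℝ) (hs : 0 ≤ s)
    (h : 1 - s ^ 2 ≤ ⟪a, b⟫ / (‖a‖ * ‖b‖)) :
    ‖(‖a‖)⁻¹ • a - (‖b‖)⁻¹ • b‖ ≤ Real.sqrt 2 * s := by
  have hsq : ‖(‖a‖)⁻¹ • a - (‖b‖)⁻¹ • b‖ ^ 2 ≤ 2 * s ^ 2 := by
    rw [norm_unit_sub_sq a b ha hb]; nlinarith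
  have hrhs : 0 ≤ Real.sqrt 2 * s := mul_nonneg (Real.sqrt_nonneg 2) hs
  nlinarith [Real.sq_sqrt (by norm_num : (2:ℝ) ≥ 0), norm_nonneg ((‖a‖)⁻¹ • a - (‖b‖)⁻¹ • b),
    Real.sqrt_nonneg 2]

/-- if `cos(x_l, x_{l+1}) ≥ 1 - δ²`, `cos(x_l, r_l) ≥ 1 - ι²`, and
`cos(x_{l+1}, r_{l+1}) ≥ 1 - ι²` for nonzero vectors and `δ, ι ∈ (0,1)`, then the unit
normalizations of `r_l, r_{l+1}` are `√2(δ + 2ι)`-close, and hence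
`cos(r_l, r_{l+1}) ≥ 1 - (δ + 2ι)²`. -/
theorem router_direction_transfer
    {F : Type*} [NormedAddCommGroup F] [InnerProductSpace ℝ F]
    (xl xl1 rl rl1 : F) (δ ι : ℝ)
    (hxl : xl ≠ 0) (hxl1 : xl1 ≠ 0) (hrl : rl ≠ 0) (hrl1 : rl1 ≠ 0)
    (hδ : δ ∈ Set.Ioo (0 : ℝ) 1) (hι : ι ∈ Set.Ioo (0 : ℝ) 1)
    (h1 : 1 - δ ^ 2 ≤ ⟪xl, xl1⟫ / (‖xl‖ * ‖xl1‖))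
    (h2 : 1 - ι ^ 2 ≤ ⟪xl, rl⟫ / (‖xl‖ * ‖rl‖))
    (h3 : 1 - ι ^ 2 ≤ ⟪xl1, rl1⟫ / (‖xl1‖ * ‖rl1‖)) :
    ‖(‖rl‖)⁻¹ • rl - (‖rl1‖)⁻¹ • rl1‖ ≤ Real.sqrt 2 * (δ + 2 * ι) ∧
    1 - (δ + 2 * ι) ^ 2 ≤ ⟪rl, rl1⟫ / (‖rl‖ * ‖rl1‖) := by
  obtain ⟨hδ0, hδ1⟩ := hδ
  obtain ⟨hι0, hι1⟩ := hι
  have hA : ‖(‖xl‖)⁻¹ • xl - (‖xl1‖)⁻¹ • xl1‖ ≤ Real.sqrt 2 * δ :=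
    norm_unit_sub_le xl xl1 hxl hxl1 δ hδ0.le h1
  have hB : ‖(‖rl‖)⁻¹ • rl - (‖xl‖)⁻¹ • xl‖ ≤ Real.sqrt 2 * ι := by
    have := norm_unit_sub_le xl rl hxl hrl ι hι0.le h2
    rwa [norm_sub_rev] at this
  have hC : ‖(‖xl1‖)⁻¹ • xl1 - (‖rl1‖)⁻¹ • rl1‖ ≤ Real.sqrt 2 * ι :=
    norm_unit_sub_le xl1 rl1 hxl1 hrl1 ι hι0.le h3
  have hmain : ‖(‖rl‖)⁻¹ • rl - (‖rl1‖)⁻¹ • rl1‖ ≤ Real.sqrt 2 * (δ + 2 * ι) := by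
    have htri : ‖(‖rl‖)⁻¹ • rl - (‖rl1‖)⁻¹ • rl1‖ ≤
        ‖(‖rl‖)⁻¹ • rl - (‖xl‖)⁻¹ • xl‖ + ‖(‖xl‖)⁻¹ • xl - (‖xl1‖)⁻¹ • xl1‖ +
        ‖(‖xl1‖)⁻¹ • xl1 - (‖rl1‖)⁻¹ • rl1‖ := by
      have := norm_sub_le_norm_sub_add_norm_sub ((‖rl‖)⁻¹ • rl) ((‖xl‖)⁻¹ • xl) ((‖rl1‖)⁻¹ • rl1)
      have h2' := norm_sub_le_norm_sub_add_norm_sub ((‖xl‖)⁻¹ • xl) ((‖xl1‖)⁻¹ • xl1) ((‖rl1‖)⁻¹ • rl1)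
      linarith
    calc ‖(‖rl‖)⁻¹ • rl - (‖rl1‖)⁻¹ • rl1‖ ≤ _ := htri
      _ ≤ Real.sqrt 2 * ι + Real.sqrt 2 * δ + Real.sqrt 2 * ι := by gcongr
      _ = Real.sqrt 2 * (δ + 2 * ι) := by ring
  refine ⟨hmain, ?_⟩
  have hsq := norm_unit_sub_sq rl rl1 hrl hrl1
  have h2sq : Real.sqrt 2 ^ 2 = 2 := Real.sq_sqrt (by norm_num)
  nlinarith [norm_nonneg ((‖rl‖)⁻¹ • rl - (‖rl1‖)⁻¹ • rl1), Real.sqrt_nonneg 2,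
    mul_nonneg (Real.sqrt_nonneg 2) (by positivity : (0:ℝ) ≤ δ + 2 * ι)]
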